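/- Let ϱ₀ > 0 and L ≥ 0 be real numbers, set α_k = 1/k, and set K := exp( ϱ₀ + L² ∑_{k=1}^∞ α_k² ). Suppose 1 − ϱ₀ α_k + L² α_k² ≥ 0 for all k ≥ n₀. Then for every n ≥ 1 and every integer n₀ with 1 ≤ n₀ < n, ∏_{k=n₀}^{n} (1 − ϱ₀ α_k + L² α_k²) ≤ K · n₀^{ϱ₀} / (n+1)^{ϱ₀}. -/

import Mathlib

open MeasureTheory ProbabilityTheory Filter Matrix

noncomputable section

attribute [local instance] Matrix.normedAddCommGroup

/-- One-step transition operator of a Markov kernel acting on real-valued functions: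
`(Pop P g)(z) = ∫ g(y) P(z, dy)`. -/
def Pop {Z : Type*} [MeasurableSpace Z] (P : Kernel Z Z) (g : Z → ℝ) (z : Z) : ℝ :=
  ∫ y, g y ∂(P z)

/-- `n`-step transition operator `Pⁿ`. -/
def Pn {Z : Type*} [MeasurableSpace Z] (P : Kernel Z Z) : ℕ → (Z → ℝ) → Z → ℝ
  | 0 => fun g => g
  | n + 1 => fun g => Pop P (Pn P n g)

/-- `g ∈ L∞^V` : `|g|` is bounded by a constant multiple of `V`. -/
def BddV {Z : Type*} (V g : Z → ℝ) : Prop :=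
  ∃ C : ℝ, ∀ z, |g z| ≤ C * V z

/-- `V`-uniform ergodicity of the kernel `P` with invariant probability measure `π`:
there are `ρ ∈ (0,1)` and `B < ∞` such that `|Pⁿg(z) − π(g)| ≤ B ‖g‖_V ρⁿ V(z)`. -/
def VUniformlyErgodic {Z : Type*} [MeasurableSpace Z] (P : Kernel Z Z) (π : Measure Z)
    (V : Z → ℝ) : Prop :=
  ∃ ρ B : ℝ, ρ ∈ Set.Ioo (0 : ℝ) 1 ∧ 0 ≤ B ∧
    ∀ (g : Z → ℝ) (C : ℝ), Measurable g → (∀ z, |g z| ≤ C * V z) →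
      ∀ (n : ℕ) (z : Z), |Pn P n g z - ∫ x, g x ∂π| ≤ B * C * ρ ^ n * V z

/-- Cross-moment matrix `E[X Yᵀ]`. -/
def crossMat {Ω : Type*} [MeasurableSpace Ω] (μ : Measure Ω) {d : ℕ}
    (X Y : Ω → Fin d → ℝ) : Matrix (Fin d) (Fin d) ℝ :=
  Matrix.of fun i j => ∫ ω, X ω i * Y ω j ∂μ

/-- Covariance-type matrix `E[X Xᵀ]`. -/
def covMat {Ω : Type*} [MeasurableSpace Ω] (μ : Measure Ω) {d : ℕ}
    (X : Ω → Fin d → ℝ) : Matrix (Fin d) (Fin d) ℝ :=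
  crossMat μ X X

/-- `∫∫ (g(z') − Pg(z)) (h(z') − Ph(z))ᵀ P(z, dz') π(dz)`. -/
def steadyCross {Z : Type*} [MeasurableSpace Z] (P : Kernel Z Z) (π : Measure Z) {d : ℕ}
    (g h : Z → Fin d → ℝ) : Matrix (Fin d) (Fin d) ℝ :=
  Matrix.of fun i j =>
    ∫ z, ∫ z', (g z' i - Pop P (fun y => g y i) z) * (h z' j - Pop P (fun y => h y j) z)
      ∂(P z) ∂π

/-- The asymptotic covariance matrix
`Σ_Δ = ∫∫ (f̂(z') − Pf̂(z))(f̂(z') − Pf̂(z))ᵀ P(z, dz') π(dz)`. -/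
def SigmaDelta {Z : Type*} [MeasurableSpace Z] (P : Kernel Z Z) (π : Measure Z) {d : ℕ}
    (fhat : Z → Fin d → ℝ) : Matrix (Fin d) (Fin d) ℝ :=
  steadyCross P π fhat fhat

/-- `E_π[Δ^m Ẑᵀ] = ∫∫ (f̂(z') − Pf̂(z)) f̂̂(z')ᵀ P(z, dz') π(dz)`. -/
def martCrossZ {Z : Type*} [MeasurableSpace Z] (P : Kernel Z Z) (π : Measure Z) {d : ℕ}
    (fhat fhh : Z → Fin d → ℝ) : Matrix (Fin d) (Fin d) ℝ :=
  Matrix.of fun i j =>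
    ∫ z, ∫ z', (fhat z' i - Pop P (fun y => fhat y i) z) * fhh z' j ∂(P z) ∂π

/-- All eigenvalues (over `ℂ`) of the real matrix `A` have real part `< c`. -/
def EigReLT {d : ℕ} (A : Matrix (Fin d) (Fin d) ℝ) (c : ℝ) : Prop :=
  ∀ (l : ℂ) (v : Fin d → ℂ), v ≠ 0 → (A.map Complex.ofReal).mulVec v = l • v → l.re < c

/-- A real square matrix is Hurwitz if all of its eigenvalues have negative real part. -/
def IsHurwitz {d : ℕ} (A : Matrix (Fin d) (Fin d) ℝ) : Prop :=
  EigReLT A 0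

theorem stmt16 (ϱ0 L : ℝ) (hϱ0 : 0 < ϱ0) (hL : 0 ≤ L) (K : ℝ)
    (hK : K = Real.exp (ϱ0 + L ^ 2 * ∑' k : ℕ, (((k : ℝ) + 1)⁻¹) ^ 2)) :
    ∀ n n0 : ℕ, 1 ≤ n0 → n0 < n →
      (∀ k : ℕ, n0 ≤ k → 0 ≤ 1 - ϱ0 * (k : ℝ)⁻¹ + L ^ 2 * ((k : ℝ)⁻¹) ^ 2) →
      ∏ k ∈ Finset.Icc n0 n, (1 - ϱ0 * (k : ℝ)⁻¹ + L ^ 2 * ((k : ℝ)⁻¹) ^ 2)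
        ≤ K * (n0 : ℝ) ^ ϱ0 / ((n : ℝ) + 1) ^ ϱ0 := by
  intro n n0 hn0 hn0n hpos
  set S : ℝ := ∑' k : ℕ, (((k : ℝ) + 1)⁻¹) ^ 2 with hSdef
  have hSnn : 0 ≤ S := tsum_nonneg fun k => by positivity
  have hsum : Summable (fun k : ℕ => (((k : ℝ) + 1)⁻¹) ^ 2) := by
    have h2 : Summable (fun k : ℕ => 1 / (k : ℝ) ^ 2) :=
      Real.summable_one_div_nat_pow.mpr one_lt_two
    have := (summable_nat_add_iff 1).mpr h2
    refine this.congr fun k => ?_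
    push_cast
    rw [inv_pow]
    ring
  -- Step 1: product ≤ exp of sum
  have h1 : ∏ k ∈ Finset.Icc n0 n, (1 - ϱ0 * (k : ℝ)⁻¹ + L ^ 2 * ((k : ℝ)⁻¹) ^ 2)
      ≤ Real.exp (∑ k ∈ Finset.Icc n0 n, (-(ϱ0 * (k : ℝ)⁻¹) + L ^ 2 * ((k : ℝ)⁻¹) ^ 2)) := by
    rw [Real.exp_sum]
    apply Finset.prod_le_prod
    · intro k hk; exact hpos k (Finset.mem_Icc.mp hk).1
    · intro k hk
      have := Real.add_one_le_exp (-(ϱ0 * (k : ℝ)⁻¹) + L ^ 2 * ((k : ℝ)⁻¹) ^ 2)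
      linarith
  -- Step 2a: harmonic lower bound
  have htel : ∑ k ∈ Finset.Icc n0 n, (Real.log (k + 1) - Real.log k)
      = Real.log (n + 1) - Real.log n0 := by
    have h : Finset.Icc n0 n = Finset.Ico n0 (n + 1) := by
      rw [Finset.Ico_add_one_right_eq_Icc]
    rw [h, Finset.sum_Ico_eq_sum_range]
    have e : ∀ i : ℕ, Real.log ((n0 + i : ℕ) + 1) - Real.log (n0 + i : ℕ)
        = (fun j => Real.log ((n0 + j : ℕ) : ℝ)) (i + 1) - (fun j => Real.log ((n0 + j : ℕ) : ℝ)) i := by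
      intro i; simp; push_cast; ring_nf
    rw [Finset.sum_congr rfl fun i _ => e i,
      Finset.sum_range_sub (fun j => Real.log ((n0 + j : ℕ) : ℝ))]
    have : n0 + (n + 1 - n0) = n + 1 := by omega
    rw [this]
    push_cast
    ring
  have hharm : Real.log (n + 1) - Real.log n0 ≤ ∑ k ∈ Finset.Icc n0 n, (k : ℝ)⁻¹ := by
    rw [← htel]
    apply Finset.sum_le_sum
    intro k hk
    have hk1 : 1 ≤ k := le_trans hn0 (Finset.mem_Icc.mp hk).1
    have hkpos : (0 : ℝ) < k := by exact_mod_cast hk1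
    have : Real.log (((k : ℝ) + 1) / k) ≤ ((k : ℝ) + 1) / k - 1 :=
      Real.log_le_sub_one_of_pos (by positivity)
    rw [Real.log_div (by positivity) (ne_of_gt hkpos)] at this
    have : ((k : ℝ) + 1) / k - 1 = (k : ℝ)⁻¹ := by field_simp; ring
    linarith [Real.log_le_sub_one_of_pos (show (0:ℝ) < ((k : ℝ) + 1) / k by positivity),
      Real.log_div (show ((k:ℝ)+1) ≠ 0 by positivity) (ne_of_gt hkpos)]
  -- Step 2b: sum of squares ≤ S
  have hsq : ∑ k ∈ Finset.Icc n0 n, ((k : ℝ)⁻¹) ^ 2 ≤ S := by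
    have h : Finset.Icc n0 n = Finset.Ico n0 (n + 1) := by rw [Finset.Ico_add_one_right_eq_Icc]
    rw [hSdef, h, Finset.sum_Ico_eq_sum_range]
    have e : ∀ i ∈ Finset.range (n + 1 - n0),
        (((n0 + i : ℕ) : ℝ)⁻¹) ^ 2 = (fun k : ℕ => (((k : ℝ) + 1)⁻¹) ^ 2) ((n0 - 1) + i) := by
      intro i _
      have h2 : (n0 - 1) + i + 1 = n0 + i := by omega
      simp only []
      rw [show (((n0 - 1 + i : ℕ) : ℝ) + 1) = ((n0 + i : ℕ) : ℝ) by exact_mod_cast congrArg (Nat.cast (R := ℝ)) h2]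
    rw [Finset.sum_congr rfl e, show n + 1 - n0 = n - (n0 - 1) by omega,
      ← Finset.sum_Ico_eq_sum_range (f := fun k : ℕ => (((k : ℝ) + 1)⁻¹) ^ 2)]
    exact Summable.sum_le_tsum _ (fun j _ => by positivity) hsum
  -- Step 3: combine
  have hsplit : ∑ k ∈ Finset.Icc n0 n, (-(ϱ0 * (k : ℝ)⁻¹) + L ^ 2 * ((k : ℝ)⁻¹) ^ 2)
      = -(ϱ0 * ∑ k ∈ Finset.Icc n0 n, (k : ℝ)⁻¹)
        + L ^ 2 * ∑ k ∈ Finset.Icc n0 n, ((k : ℝ)⁻¹) ^ 2 := by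
    rw [Finset.sum_add_distrib, Finset.mul_sum, Finset.mul_sum, Finset.sum_neg_distrib]
  have h2 : ∑ k ∈ Finset.Icc n0 n, (-(ϱ0 * (k : ℝ)⁻¹) + L ^ 2 * ((k : ℝ)⁻¹) ^ 2)
      ≤ -(ϱ0 * (Real.log (n + 1) - Real.log n0)) + L ^ 2 * S := by
    rw [hsplit]
    have hLS : L ^ 2 * ∑ k ∈ Finset.Icc n0 n, ((k : ℝ)⁻¹) ^ 2 ≤ L ^ 2 * S :=
      mul_le_mul_of_nonneg_left hsq (by positivity)
    nlinarith [hharm]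
  have hn0pos : (0 : ℝ) < n0 := by exact_mod_cast Nat.lt_of_lt_of_le Nat.zero_lt_one hn0
  have hn1pos : (0 : ℝ) < (n : ℝ) + 1 := by positivity
  have key : Real.exp (-(ϱ0 * (Real.log (n + 1) - Real.log n0)) + L ^ 2 * S)
      = Real.exp (L ^ 2 * S) * (n0 : ℝ) ^ ϱ0 / ((n : ℝ) + 1) ^ ϱ0 := by
    rw [Real.rpow_def_of_pos hn0pos, Real.rpow_def_of_pos hn1pos, ← Real.exp_add,
      ← Real.exp_sub]
    congr 1
    ring
  have hKbig : Real.exp (L ^ 2 * S) ≤ K := by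
    rw [hK]
    exact Real.exp_le_exp.mpr (by linarith)
  calc ∏ k ∈ Finset.Icc n0 n, (1 - ϱ0 * (k : ℝ)⁻¹ + L ^ 2 * ((k : ℝ)⁻¹) ^ 2)
      ≤ Real.exp (∑ k ∈ Finset.Icc n0 n, (-(ϱ0 * (k : ℝ)⁻¹) + L ^ 2 * ((k : ℝ)⁻¹) ^ 2)) := h1
    _ ≤ Real.exp (-(ϱ0 * (Real.log (n + 1) - Real.log n0)) + L ^ 2 * S) :=
        Real.exp_le_exp.mpr h2
    _ = Real.exp (L ^ 2 * S) * (n0 : ℝ) ^ ϱ0 / ((n : ℝ) + 1) ^ ϱ0 := key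
    _ ≤ K * (n0 : ℝ) ^ ϱ0 / ((n : ℝ) + 1) ^ ϱ0 := by gcongr
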